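/- Let p be a prime number and F a finite field with |F| = p. Under the group homomorphism SL₂(F) → SL₂(F[ε]) induced by the canonical inclusion of F into the ring of dual numbers F[ε] = F[x]/(x²), the image of SL₂(F) has index p³ in SL₂(F[ε]). -/

import Mathlib

open Polynomial

namespace SL2RamifiedAux

variable {F : Type*} [Field F]

noncomputable def piF (F : Type*) [Field F] : AdjoinRoot (X ^ 2 : F[X]) →+* F :=
  AdjoinRoot.lift (RingHom.id F) 0 (by simp)

lemma pi_of (a : F) : piF F (AdjoinRoot.of _ a) = a := by
  exact AdjoinRoot.lift_of (h := by simp)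

lemma pi_root : piF F (AdjoinRoot.root (X ^ 2 : F[X])) = 0 :=
  AdjoinRoot.lift_root (h := by simp)

lemma root_sq : AdjoinRoot.root (X ^ 2 : F[X]) * AdjoinRoot.root (X ^ 2 : F[X]) = 0 := by
  have := AdjoinRoot.eval₂_root (X ^ 2 : F[X])
  simpa [pow_two] using this

lemma root_ne_zero : AdjoinRoot.root (X ^ 2 : F[X]) ≠ 0 := by
  rw [AdjoinRoot.root, Ne, AdjoinRoot.mk_eq_zero]
  intro h
  have := Polynomial.natDegree_le_of_dvd h (X_ne_zero)
  simp at this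

lemma repr_exists (z : AdjoinRoot (X ^ 2 : F[X])) :
    ∃ a b : F, z = AdjoinRoot.of _ a + AdjoinRoot.of _ b * AdjoinRoot.root _ := by
  obtain ⟨f, rfl⟩ := AdjoinRoot.mk_surjective z
  refine ⟨(f %ₘ X ^ 2).coeff 0, (f %ₘ X ^ 2).coeff 1, ?_⟩
  have hmod : AdjoinRoot.mk (X ^ 2 : F[X]) f = AdjoinRoot.mk _ (f %ₘ X ^ 2) := by
    conv_lhs => rw [← Polynomial.modByMonic_add_div f (X ^ 2)]
    rw [map_add, AdjoinRoot.mk_eq_zero.2 (dvd_mul_right _ _) , add_zero]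
  have hdeg : (f %ₘ X ^ 2).degree ≤ 1 := by
    have := Polynomial.degree_modByMonic_lt f (monic_X_pow (R := F) 2)
    rw [degree_X_pow] at this
    exact Order.le_of_lt_succ (by exact_mod_cast this)
  rw [hmod]
  conv_lhs => rw [Polynomial.eq_X_add_C_of_degree_le_one hdeg]
  rw [map_add, map_mul, AdjoinRoot.mk_C, AdjoinRoot.mk_C, AdjoinRoot.mk_X]
  ring

lemma repr_unique {a b a' b' : F}
    (h : AdjoinRoot.of _ a + AdjoinRoot.of _ b * AdjoinRoot.root _ =
      AdjoinRoot.of (X ^ 2 : F[X]) a' + AdjoinRoot.of _ b' * AdjoinRoot.root _) :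
    a = a' ∧ b = b' := by
  have ha : a = a' := by
    have := congrArg (piF F) h
    simpa [pi_of, pi_root] using this
  subst ha
  have hb : (AdjoinRoot.of (X ^ 2 : F[X]) (b - b')) * AdjoinRoot.root _ = 0 := by
    rw [map_sub, sub_mul]
    rw [add_comm] at h
    nth_rewrite 2 [add_comm] at h
    have := add_right_cancel h
    rw [this, sub_self]
  refine ⟨rfl, ?_⟩
  by_contra hbb
  have hunit : IsUnit (AdjoinRoot.of (X ^ 2 : F[X]) (b - b')) :=
    (AdjoinRoot.of _).isUnit_map (Ne.isUnit (sub_ne_zero.2 hbb))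
  exact root_ne_zero ((hunit.mul_right_eq_zero).1 hb)

local notation "ε" => AdjoinRoot.root (X ^ 2 : F[X])
local notation "o" => AdjoinRoot.of (X ^ 2 : F[X])

/-- explicit element of the kernel -/
noncomputable def kMat (x y z : F) :
    Matrix.SpecialLinearGroup (Fin 2) (AdjoinRoot (X ^ 2 : F[X])) :=
  ⟨!![1 + o x * ε, o y * ε; o z * ε, 1 - o x * ε], by
    rw [Matrix.det_fin_two_of]
    linear_combination (-(o x * o x) - o y * o z) * (root_sq (F := F))⟩

lemma kMat_mem (x y z : F) :
    kMat x y z ∈ (Matrix.SpecialLinearGroup.map (n := Fin 2) (piF F)).ker := by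
  rw [MonoidHom.mem_ker]
  ext i j
  rw [Matrix.SpecialLinearGroup.map_apply_coe]
  fin_cases i <;> fin_cases j <;>
    simp [kMat, Matrix.SpecialLinearGroup.map_apply_coe, pi_of, pi_root, Matrix.one_apply]

noncomputable def kerEquiv :
    (F × F × F) ≃ (Matrix.SpecialLinearGroup.map (n := Fin 2) (piF F)).ker := by
  refine Equiv.ofBijective (fun t => ⟨kMat t.1 t.2.1 t.2.2, kMat_mem _ _ _⟩) ⟨?_, ?_⟩
  · rintro ⟨x, y, z⟩ ⟨x', y', z'⟩ h
    have h' := (Matrix.SpecialLinearGroup.ext_iff (kMat x y z) (kMat x' y' z')).mp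
      (Subtype.ext_iff.mp h)
    have h00 := h' 0 0
    have h01 := h' 0 1
    have h10 := h' 1 0
    simp only [kMat, Matrix.cons_val', Matrix.cons_val_zero, Matrix.cons_val_one,
      Matrix.head_cons, Matrix.empty_val', Matrix.cons_val_fin_one, Matrix.head_fin_const] at h00 h01 h10
    have hx : x = x' := by
      have : o 1 + o x * ε = o 1 + o x' * ε := by rw [map_one]; exact h00
      exact (repr_unique this).2
    have hy : y = y' := by
      have : o 0 + o y * ε = o 0 + o y' * ε := by rw [map_zero]; simpa using h01
      exact (repr_unique this).2
    have hz : z = z' := by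
      have : o 0 + o z * ε = o 0 + o z' * ε := by rw [map_zero]; simpa using h10
      exact (repr_unique this).2
    simp [hx, hy, hz]
  · rintro ⟨A, hA⟩
    rw [MonoidHom.mem_ker] at hA
    have hA' : ∀ i j, piF F (A i j) = (1 : Matrix (Fin 2) (Fin 2) F) i j := by
      intro i j
      have h2 := (Matrix.SpecialLinearGroup.ext_iff _ _).mp hA i j
      simp only [Matrix.SpecialLinearGroup.map_apply_coe, RingHom.mapMatrix_apply,
        Matrix.map_apply, Matrix.SpecialLinearGroup.coe_one] at h2
      exact h2
    obtain ⟨a00, b00, h00⟩ := repr_exists (A 0 0)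
    obtain ⟨a01, b01, h01⟩ := repr_exists (A 0 1)
    obtain ⟨a10, b10, h10⟩ := repr_exists (A 1 0)
    obtain ⟨a11, b11, h11⟩ := repr_exists (A 1 1)
    have ha00 : a00 = 1 := by
      have := hA' 0 0; rw [h00] at this
      simpa [pi_of, pi_root, Matrix.one_apply] using this
    have ha01 : a01 = 0 := by
      have := hA' 0 1; rw [h01] at this
      simpa [pi_of, pi_root, Matrix.one_apply] using this
    have ha10 : a10 = 0 := by
      have := hA' 1 0; rw [h10] at this
      simpa [pi_of, pi_root, Matrix.one_apply] using this
    have ha11 : a11 = 1 := by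
      have := hA' 1 1; rw [h11] at this
      simpa [pi_of, pi_root, Matrix.one_apply] using this
    subst ha00 ha01 ha10 ha11
    have hdet : A 0 0 * A 1 1 - A 0 1 * A 1 0 = 1 := by
      have := A.prop
      rwa [Matrix.det_fin_two] at this
    rw [h00, h01, h10, h11] at hdet
    have hkey : o 1 + o (b00 + b11) * ε = o 1 + o 0 * ε := by
      simp only [map_add, map_one, map_zero] at hdet ⊢
      linear_combination hdet + (-(o b00 * o b11) + o b01 * o b10) * (root_sq (F := F))
    have hb : b00 + b11 = 0 := (repr_unique hkey).2
    have hb11 : b11 = -b00 := by rw [eq_neg_iff_add_eq_zero, add_comm]; exact hb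
    refine ⟨(b00, b01, b10), ?_⟩
    apply Subtype.ext
    apply Subtype.ext
    ext i j
    fin_cases i <;> fin_cases j <;>
      simp [kMat, h00, h01, h10, h11, hb11, map_neg] <;> ring

end SL2RamifiedAux


/-- Let `p` be a prime and `F` a finite field with `|F| = p`.  Under the group homomorphism
`SL₂(F) → SL₂(F[ε])` induced by the canonical inclusion of `F` into the ring of dual numbers
`F[ε] = F[x]/(x²)`, the image of `SL₂(F)` has index `p³`. -/
theorem index_range_SL2_ramified (p : ℕ) (hp : p.Prime) (F : Type*) [Field F] [Fintype F]
    (hF : Fintype.card F = p) :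
    (Matrix.SpecialLinearGroup.map (n := Fin 2)
        (AdjoinRoot.of (X ^ 2 : Polynomial F))).range.index = p ^ 3 := by
  classical
  set Φ := Matrix.SpecialLinearGroup.map (n := Fin 2) (SL2RamifiedAux.piF F) with hΦ
  set ι := Matrix.SpecialLinearGroup.map (n := Fin 2)
    (AdjoinRoot.of (X ^ 2 : Polynomial F)) with hι
  have hcomp : ∀ g, Φ (ι g) = g := by
    intro g
    ext i j
    simp [hΦ, hι, Matrix.SpecialLinearGroup.map_apply_coe, SL2RamifiedAux.pi_of]
  have hcompl : Subgroup.IsComplement' Φ.ker ι.range := by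
    rw [Subgroup.isComplement'_def, Subgroup.isComplement_iff_existsUnique]
    intro g
    refine ⟨⟨⟨g * (ι (Φ g))⁻¹, ?_⟩, ⟨ι (Φ g), ⟨Φ g, rfl⟩⟩⟩, ?_, ?_⟩
    · simp [MonoidHom.mem_ker, hcomp]
    · simp
    · rintro ⟨⟨k, hk⟩, ⟨-, ⟨a, rfl⟩⟩⟩ hg
      simp only at hg
      have hk1 : Φ k = 1 := by simpa [MonoidHom.mem_ker] using hk
      have ha : Φ g = a := by
        rw [← hg, map_mul, hk1, one_mul, hcomp]
      have hka : k = g * (ι (Φ g))⁻¹ := by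
        rw [ha, ← hg, mul_inv_cancel_right]
      refine Prod.ext (Subtype.ext hka) (Subtype.ext ?_)
      simp [ha]
  have hindex : ι.range.index = Nat.card Φ.ker := hcompl.index_eq_card
  rw [hindex, Nat.card_congr (SL2RamifiedAux.kerEquiv (F := F)).symm,
    Nat.card_prod, Nat.card_prod, Nat.card_eq_fintype_card, hF]
  ring
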